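/- arXiv:1804.03524 — 6 statements merged into one kernel-verified Lean document; each statement's English description precedes it below -/
import Mathlib

section
/- For normal subgroup H of G_x with coset enumeration ⟨H_γ⟩ and associated cosets K_γ = φ(H_γ) in G_y, the converse (inverse relation) of R_α = ⋃_γ H_γ × (K_γ ∘ K_α) equals R'_β = ⋃_γ K_γ × (H_γ ∘ H_β) (the analogous relation built from φ⁻¹) if and only if H_β = (H_α)⁻¹ (the coset of inverses), provided φ⁻¹ is used as the isomorphism from G_y/K to G_x/H. -/
open scoped Pointwise

def cosetSet {G : Type*} [Group G] (H : Subgroup G) (q : G ⧸ H) : Set G :=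
  {g | (QuotientGroup.mk g : G ⧸ H) = q}

/-- `R_α = ⋃_γ H_γ × (K_γ ∘ K_α)` with `K_γ = φ(H_γ)`. -/
def cosetRel {Gx Gy : Type*} [Group Gx] [Group Gy] (H : Subgroup Gx) [H.Normal]
    (K : Subgroup Gy) [K.Normal] (φ : (Gx ⧸ H) ≃* (Gy ⧸ K)) (α : Gx ⧸ H) :
    Set (Gx × Gy) :=
  ⋃ γ : Gx ⧸ H, cosetSet H γ ×ˢ (cosetSet K (φ γ) * cosetSet K (φ α))

/-- `R'_β = ⋃_γ K_γ × (H_γ ∘ H_β)`, the analogous relation built using `φ⁻¹` as the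
isomorphism from `G_y/K` to `G_x/H`. -/
def cosetRel' {Gx Gy : Type*} [Group Gx] [Group Gy] (H : Subgroup Gx) [H.Normal]
    (K : Subgroup Gy) [K.Normal] (φ : (Gx ⧸ H) ≃* (Gy ⧸ K)) (β : Gx ⧸ H) :
    Set (Gy × Gx) :=
  ⋃ γ : Gx ⧸ H, cosetSet K (φ γ) ×ˢ (cosetSet H γ * cosetSet H β)

lemma mem_cosetSet_mul {G : Type*} [Group G] (H : Subgroup G) [H.Normal]
    (a b : G ⧸ H) (z : G) :
    z ∈ cosetSet H a * cosetSet H b ↔ (QuotientGroup.mk z : G ⧸ H) = a * b := by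
  constructor
  · rintro ⟨s, hs, t, ht, rfl⟩
    simp only [cosetSet, Set.mem_setOf_eq] at hs ht
    rw [QuotientGroup.mk_mul, hs, ht]
  · intro hz
    obtain ⟨s, rfl⟩ := QuotientGroup.mk_surjective a
    exact ⟨s, rfl, s⁻¹ * z, by
      simp only [cosetSet, Set.mem_setOf_eq, QuotientGroup.mk_mul, QuotientGroup.mk_inv, hz]
      group, by group⟩

lemma cosetSet_eq_iff {G : Type*} [Group G] (H : Subgroup G) (a b : G ⧸ H) :
    cosetSet H a = cosetSet H b ↔ a = b := by
  constructor
  · intro h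
    obtain ⟨s, rfl⟩ := QuotientGroup.mk_surjective a
    have : s ∈ cosetSet H b := h ▸ rfl
    exact this
  · rintro rfl; rfl

lemma cosetSet_inv {G : Type*} [Group G] (H : Subgroup G) [H.Normal] (a : G ⧸ H) :
    (cosetSet H a)⁻¹ = cosetSet H a⁻¹ := by
  ext g
  simp only [cosetSet, Set.mem_inv, Set.mem_setOf_eq]
  rw [QuotientGroup.mk_inv, inv_eq_iff_eq_inv]

/-- Converse Theorem: the converse (inverse relation) of `R_α` equals `R'_β` if and only
if the coset `H_β` is the coset of inverses `(H_α)⁻¹`. -/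
theorem converse_cosetRel_eq_iff {Gx Gy : Type*} [Group Gx] [Group Gy]
    (H : Subgroup Gx) [H.Normal] (K : Subgroup Gy) [K.Normal]
    (φ : (Gx ⧸ H) ≃* (Gy ⧸ K)) (α β : Gx ⧸ H) :
    Prod.swap ⁻¹' (cosetRel H K φ α) = cosetRel' H K φ β ↔
      cosetSet H β = (cosetSet H α)⁻¹ := by
  rw [cosetSet_inv, cosetSet_eq_iff]
  have hmem : ∀ (x : Gx) (y : Gy),
      ((y, x) ∈ Prod.swap ⁻¹' (cosetRel H K φ α) ↔
        (QuotientGroup.mk y : Gy ⧸ K) = φ (QuotientGroup.mk x) * φ α) := by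
    intro x y
    simp only [Set.mem_preimage, Prod.swap_prod_mk, cosetRel, Set.mem_iUnion,
      Set.mem_prod, mem_cosetSet_mul]
    constructor
    · rintro ⟨γ, h1, h2⟩
      rw [show γ = QuotientGroup.mk x from h1.symm] at h2
      exact h2
    · intro h
      exact ⟨QuotientGroup.mk x, rfl, h⟩
  have hmem' : ∀ (x : Gx) (y : Gy),
      ((y, x) ∈ cosetRel' H K φ β ↔
        (QuotientGroup.mk x : Gx ⧸ H) = φ.symm (QuotientGroup.mk y) * β) := by
    intro x y
    simp only [cosetRel', Set.mem_iUnion, Set.mem_prod, mem_cosetSet_mul]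
    constructor
    · rintro ⟨γ, h1, h2⟩
      rw [show γ = φ.symm (QuotientGroup.mk y) by
        rw [show (QuotientGroup.mk y : Gy ⧸ K) = φ γ from h1,
          MulEquiv.symm_apply_apply]] at h2
      exact h2
    · intro h
      refine ⟨φ.symm (QuotientGroup.mk y), ?_, h⟩
      simp [cosetSet]
  constructor
  · intro h
    obtain ⟨x, hx⟩ := QuotientGroup.mk_surjective (1 : Gx ⧸ H)
    obtain ⟨y, hy⟩ := QuotientGroup.mk_surjective (φ (QuotientGroup.mk x) * φ α)
    have h1 := (hmem x y).mpr hy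
    rw [h] at h1
    have h2 := (hmem' x y).mp h1
    rw [hy, ← map_mul, MulEquiv.symm_apply_apply] at h2
    have h3 : QuotientGroup.mk x * (α * β) = QuotientGroup.mk x * 1 := by
      rw [← mul_assoc, mul_one, ← h2]
    have h4 := mul_left_cancel h3
    have h5 := eq_inv_of_mul_eq_one_right h4
    exact h5
  · rintro rfl
    ext ⟨y, x⟩
    rw [hmem x y, hmem' x y]
    rw [← map_mul]
    constructor
    · intro h
      rw [h, MulEquiv.symm_apply_apply]
      group
    · intro h
      rw [h, mul_assoc, inv_mul_cancel, mul_one, MulEquiv.apply_symm_apply]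
end

section
/- In a full coset relation algebra with groups G_x, G_y, G_z (pairs (x,y), (y,z), (x,z) all in the quotient isomorphism index set), (G_x × G_y) ⊗ (G_y × G_z) = (G_x × G_y) ∘ (G_y × G_z) = G_x × G_z; that is, the shifted product of the two full rectangles agrees with their relational composition. -/
open scoped Pointwise

def relComp {A B C : Type*} (R : Set (A × B)) (S : Set (B × C)) : Set (A × C) :=
  {p | ∃ v, (p.1, v) ∈ R ∧ (v, p.2) ∈ S}

def preimSet {Gx Gy : Type*} [Group Gx] [Group Gy] {H : Subgroup Gx} [H.Normal]
    {K : Subgroup Gy} [K.Normal] (φ : (Gx ⧸ H) ≃* (Gy ⧸ K)) (T : Set Gy) : Set Gx :=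
  {g | ∃ t ∈ T, φ (QuotientGroup.mk g) = (QuotientGroup.mk t : Gy ⧸ K)}

/-- The shifted product `R_{xy,α} ⊗ R_{yz,β}` of atoms, determined by the shifting coset
`C = C_{xyz}` (a coset of `H_{xy} ∘ H_{xz}` in `G_x`). -/
def otimesAtom {Gx Gy Gz : Type*} [Group Gx] [Group Gy] [Group Gz]
    (Hxy : Subgroup Gx) [Hxy.Normal] (Kxy : Subgroup Gy) [Kxy.Normal]
    (Hyz : Subgroup Gy) [Hyz.Normal]
    (Hxz : Subgroup Gx) [Hxz.Normal] (Kxz : Subgroup Gz) [Kxz.Normal]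
    (φxy : (Gx ⧸ Hxy) ≃* (Gy ⧸ Kxy)) (φxz : (Gx ⧸ Hxz) ≃* (Gz ⧸ Kxz))
    (C : Set Gx) (α : Gx ⧸ Hxy) (β : Gy ⧸ Hyz) : Set (Gx × Gz) :=
  ⋃ γ ∈ {γ : Gx ⧸ Hxz |
      cosetSet Hxz γ ⊆ preimSet φxy (cosetSet Kxy (φxy α) * cosetSet Hyz β) * C},
    cosetRel Hxz Kxz φxz γ

/-- `(G_x × G_y) ⊗ (G_y × G_z) = (G_x × G_y) ∘ (G_y × G_z) = G_x × G_z`: the shifted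
product of the two full rectangles (obtained by complete additivity from the atoms that
partition them) agrees with their relational composition, which is the full rectangle
`G_x × G_z`.  (The full rectangles are `Set.univ` since each group is a whole type.) -/
theorem rectangle_otimes_eq_comp
    {Gx Gy Gz : Type*} [Group Gx] [Group Gy] [Group Gz]
    (Hxy : Subgroup Gx) [Hxy.Normal] (Kxy : Subgroup Gy) [Kxy.Normal]
    (Hyz : Subgroup Gy) [Hyz.Normal] (Kyz : Subgroup Gz) [Kyz.Normal]
    (Hxz : Subgroup Gx) [Hxz.Normal] (Kxz : Subgroup Gz) [Kxz.Normal]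
    (φxy : (Gx ⧸ Hxy) ≃* (Gy ⧸ Kxy)) (φyz : (Gy ⧸ Hyz) ≃* (Gz ⧸ Kyz))
    (φxz : (Gx ⧸ Hxz) ≃* (Gz ⧸ Kxz))
    (C : Set Gx) (hC : ∃ c : Gx, C = {c} * ((Hxy : Set Gx) * (Hxz : Set Gx))) :
    (⋃ (α : Gx ⧸ Hxy) (β : Gy ⧸ Hyz),
        otimesAtom Hxy Kxy Hyz Hxz Kxz φxy φxz C α β) =
      relComp (Set.univ : Set (Gx × Gy)) (Set.univ : Set (Gy × Gz)) ∧
    relComp (Set.univ : Set (Gx × Gy)) (Set.univ : Set (Gy × Gz)) =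
      (Set.univ : Set (Gx × Gz)) := by

  have hcomp : relComp (Set.univ : Set (Gx × Gy)) (Set.univ : Set (Gy × Gz)) =
      (Set.univ : Set (Gx × Gz)) := by
    ext ⟨a, c⟩
    simp only [relComp, Set.mem_setOf_eq, Set.mem_univ, and_self, iff_true]
    exact ⟨1, trivial⟩
  refine ⟨?_, hcomp⟩
  rw [hcomp]
  apply Set.eq_univ_of_forall
  rintro ⟨a, c⟩
  obtain ⟨c0, hC⟩ := hC
  set γ : Gx ⧸ Hxz := φxz.symm ((φxz (QuotientGroup.mk a))⁻¹ * QuotientGroup.mk c) with hγ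
  set g2 : Gx := γ.out with hg2
  have hg2γ : (QuotientGroup.mk g2 : Gx ⧸ Hxz) = γ := QuotientGroup.out_eq' γ
  refine Set.mem_iUnion.2 ⟨QuotientGroup.mk (g2 * c0⁻¹), Set.mem_iUnion.2 ⟨(1 : Gy ⧸ Hyz), ?_⟩⟩
  refine Set.mem_biUnion (x := γ) ?_ ?_
  · -- γ satisfies the subset condition
    intro g hg
    have hgγ : (QuotientGroup.mk g : Gx ⧸ Hxz) = γ := hg
    have hmem : g2⁻¹ * g ∈ Hxz := by
      have : (QuotientGroup.mk (g2⁻¹ * g) : Gx ⧸ Hxz) = 1 := by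
        rw [QuotientGroup.mk_mul, hgγ, QuotientGroup.mk_inv, hg2γ, inv_mul_cancel]
      exact (QuotientGroup.eq_one_iff _).1 this
    refine Set.mem_mul.2 ⟨g2 * c0⁻¹, ?_, c0 * (g2⁻¹ * g), ?_, by group⟩
    · -- g2*c0⁻¹ ∈ preimSet
      refine ⟨(φxy (QuotientGroup.mk (g2 * c0⁻¹))).out, ?_, ?_⟩
      · refine Set.mem_mul.2 ⟨(φxy (QuotientGroup.mk (g2 * c0⁻¹))).out, ?_, 1, ?_, mul_one _⟩
        · exact QuotientGroup.out_eq' _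
        · show (QuotientGroup.mk (1 : Gy) : Gy ⧸ Hyz) = 1
          simp
      · exact (QuotientGroup.out_eq' _).symm
    · -- c0 * (g2⁻¹*g) ∈ C
      rw [hC]
      refine Set.mem_mul.2 ⟨c0, rfl, g2⁻¹ * g, ?_, rfl⟩
      exact Set.mem_mul.2 ⟨1, Subgroup.one_mem _, g2⁻¹ * g, hmem, one_mul _⟩
  · -- (a, c) ∈ cosetRel Hxz Kxz φxz γ
    refine Set.mem_iUnion.2 ⟨QuotientGroup.mk a, ?_⟩
    refine Set.mem_prod.2 ⟨rfl, ?_⟩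
    have hφγ : φxz γ = (φxz (QuotientGroup.mk a))⁻¹ * QuotientGroup.mk c := by
      rw [hγ, MulEquiv.apply_symm_apply]
    refine Set.mem_mul.2 ⟨(φxz (QuotientGroup.mk a)).out, QuotientGroup.out_eq' _,
      ((φxz (QuotientGroup.mk a)).out)⁻¹ * c, ?_, by group⟩
    show (QuotientGroup.mk _ : Gz ⧸ Kxz) = _
    rw [QuotientGroup.mk_mul, QuotientGroup.mk_inv, QuotientGroup.out_eq', hφγ]
end

section
/- Suppose θ embeds the Lyndon algebra B of a finite line ℓ (|ℓ| ≥ 2) into a full coset relation algebra on a simple group triple, and H_{xy} ≠ {e_x}. Then there is a unique point p ∈ ℓ with (G_x × G_y) ∩ θ(p) ≠ ∅, and for this p: G_x × G_y ⊆ θ(p), G_y × G_x ⊆ θ(p), and (G_x ∪ G_y) × (G_x ∪ G_y) ⊆ θ(p ∪ {1'}). -/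
open scoped Pointwise

/-- Composition of atoms in the Lyndon algebra of a line `ℓ` (`none` is `1'`). -/
def lynAtom {ℓ : Type*} [DecidableEq ℓ] : Option ℓ → Option ℓ → Set (Option ℓ)
  | some p, some q =>
      if p = q then {some p, none}
      else {x | ∃ r : ℓ, x = some r ∧ r ≠ p ∧ r ≠ q}
  | some p, none => {some p}
  | none, q => {q}

/-- Relative multiplication in the Lyndon algebra. -/
def lynComp {ℓ : Type*} [DecidableEq ℓ] (A B : Set (Option ℓ)) : Set (Option ℓ) :=
  ⋃ a ∈ A, ⋃ b ∈ B, lynAtom a b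

/-- The pairwise disjoint groups `G x`, realized as subsets of the disjoint union. -/
def Gset {I : Type*} (G : I → Type*) (x : I) : Set (Σ x, G x) := {u | u.1 = x}

/-- The atom `R_{xy,α}` of the full coset relation algebra on the simple group triple:
`(u,v) ∈ R_{xy,α}` iff `u ∈ G_x`, `v ∈ G_y` and the `K_{xy}`-coset of `v` is
`φ_{xy}(uH_{xy}) · φ_{xy}(α)` (here `K_{xy} = H_{yx}`). -/
def Ratom {I : Type*} (G : I → Type*) [∀ x, Group (G x)]
    (H : ∀ x y, Subgroup (G x)) [∀ x y, (H x y).Normal]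
    (φ : ∀ x y, (G x ⧸ H x y) ≃* (G y ⧸ H y x))
    (x y : I) (α : G x ⧸ H x y) : Set ((Σ x, G x) × (Σ x, G x)) :=
  {p | ∃ (g : G x) (h : G y), p.1 = ⟨x, g⟩ ∧ p.2 = ⟨y, h⟩ ∧
    (QuotientGroup.mk h : G y ⧸ H y x) = φ x y (QuotientGroup.mk g) * φ x y α}

/-- Lemma fa2: if the Lyndon algebra of a finite line with at least two points embeds via
`θ` into a full coset relation algebra on a simple group triple and `H_{xy} ≠ {e_x}`,
then there is a unique point `p ∈ ℓ` with `(G_x × G_y) ∩ θ(p) ≠ ∅`, and for this `p` we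
have `G_x × G_y ⊆ θ(p)`, `G_y × G_x ⊆ θ(p)` and
`(G_x ∪ G_y) × (G_x ∪ G_y) ⊆ θ(p + 1')`. -/
theorem fa2_unique_point
    {ℓ I : Type} [Fintype ℓ] [DecidableEq ℓ] (hl : 2 ≤ Fintype.card ℓ)
    (G : I → Type) [∀ x, Group (G x)]
    (H : ∀ x y, Subgroup (G x)) [∀ x y, (H x y).Normal]
    (φ : ∀ x y, (G x ⧸ H x y) ≃* (G y ⧸ H y x))
    (hφ : ∀ x y, φ y x = (φ x y).symm)
    (hHxx : ∀ x, H x x = ⊥)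
    (otimes : Set ((Σ x, G x) × (Σ x, G x)) → Set ((Σ x, G x) × (Σ x, G x)) →
      Set ((Σ x, G x) × (Σ x, G x)))
    (hmono : ∀ A B A' B', A ⊆ A' → B ⊆ B' → otimes A B ⊆ otimes A' B')
    (θ : Set (Option ℓ) → Set ((Σ x, G x) × (Σ x, G x)))
    (hθinj : Function.Injective θ)
    (hθun : ∀ A B, θ (A ∪ B) = θ A ∪ θ B)
    (hθc : ∀ A, θ Aᶜ = (θ A)ᶜ)
    (hθid : θ {none} = {p | p.1 = p.2})
    (hθconv : ∀ A, Prod.swap ⁻¹' θ A = θ A)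
    (hθcomp : ∀ A B, θ (lynComp A B) = otimes (θ A) (θ B))
    (hrect : ∀ x y z, otimes (Gset G x ×ˢ Gset G y) (Gset G y ×ˢ Gset G z) =
      Gset G x ×ˢ Gset G z)
    (hpart : ∀ x y, (⋃ α, Ratom G H φ x y α) = Gset G x ×ˢ Gset G y)
    (hatom : ∀ x y α A, Ratom G H φ x y α ⊆ θ A ∨ Ratom G H φ x y α ∩ θ A = ∅)
    (hRconv : ∀ x y (α : G x ⧸ H x y),
      otimes (Ratom G H φ x y α) (Prod.swap ⁻¹' (Ratom G H φ x y α)) =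
        ⋃ g ∈ (H x y : Set (G x)), Ratom G H φ x x (QuotientGroup.mk g))
    (x y : I) (hxy : H x y ≠ ⊥) :
    (∃! p : ℓ, ((Gset G x ×ˢ Gset G y) ∩ θ {some p}).Nonempty) ∧
    ∀ p : ℓ, ((Gset G x ×ˢ Gset G y) ∩ θ {some p}).Nonempty →
      Gset G x ×ˢ Gset G y ⊆ θ {some p} ∧
      Gset G y ×ˢ Gset G x ⊆ θ {some p} ∧
      (Gset G x ∪ Gset G y) ×ˢ (Gset G x ∪ Gset G y) ⊆ θ {some p, none} := by

  classical
  -- basic facts about θ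
  have hθuniv : θ Set.univ = Set.univ := by
    have h := hθun (∅ : Set (Option ℓ)) (∅ : Set (Option ℓ))ᶜ
    rw [Set.union_compl_self, hθc] at h
    rw [h, Set.union_compl_self]
  have hθempty : θ ∅ = ∅ := by
    have h : θ ((Set.univ : Set (Option ℓ))ᶜ) = (θ Set.univ)ᶜ := hθc _
    simpa [hθuniv] using h
  have hθmono : ∀ A B : Set (Option ℓ), A ⊆ B → θ A ⊆ θ B := by
    intro A B hAB
    have h : A ∪ B = B := Set.union_eq_self_of_subset_left hAB
    calc θ A ⊆ θ A ∪ θ B := Set.subset_union_left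
      _ = θ (A ∪ B) := (hθun A B).symm
      _ = θ B := by rw [h]
  have hθinter : ∀ A B, θ (A ∩ B) = θ A ∩ θ B := by
    intro A B
    have h1 : A ∩ B = (Aᶜ ∪ Bᶜ)ᶜ := by
      rw [Set.compl_union, compl_compl, compl_compl]
    rw [h1, hθc, hθun, hθc, hθc, Set.compl_union, compl_compl, compl_compl]
  -- θ covers everything by singletons
  have hcover : ∀ u : (Σ x, G x) × (Σ x, G x), ∃ a : Option ℓ, u ∈ θ {a} := by
    have key : ∀ s : Finset (Option ℓ),
        θ (⋃ a ∈ s, {a}) = ⋃ a ∈ s, θ {a} := by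
      intro s
      induction s using Finset.induction_on with
      | empty => simp [hθempty]
      | insert a s hnot ih =>
          rw [Finset.set_biUnion_insert, hθun, ih, Finset.set_biUnion_insert]
    intro u
    have h1 : (⋃ a ∈ (Finset.univ : Finset (Option ℓ)), ({a} : Set (Option ℓ)))
        = Set.univ := by
      ext a; simp
    have h2 := key Finset.univ
    rw [h1, hθuniv] at h2
    have h3 : u ∈ ⋃ a ∈ (Finset.univ : Finset (Option ℓ)), θ {a} := by
      rw [← h2]; exact Set.mem_univ u
    obtain ⟨a, -, ha⟩ := Set.mem_iUnion₂.mp h3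
    exact ⟨a, ha⟩
  -- x ≠ y
  have hxney : x ≠ y := by
    rintro rfl; exact hxy (hHxx x)
  -- a nontrivial element of H x y
  have hg0 : ∃ g₀ ∈ H x y, g₀ ≠ 1 := by
    by_contra h
    push_neg at h
    exact hxy ((Subgroup.eq_bot_iff_forall _).mpr h)
  obtain ⟨g₀, hg₀mem, hg₀ne⟩ := hg0
  -- atoms are nonempty
  have hatomne : ∀ (x' y' : I) (α : G x' ⧸ H x' y'), (Ratom G H φ x' y' α).Nonempty := by
    intro x' y' α
    obtain ⟨h, hh⟩ := QuotientGroup.mk_surjective (φ x' y' α)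
    refine ⟨(⟨x', 1⟩, ⟨y', h⟩), 1, h, rfl, rfl, ?_⟩
    rw [QuotientGroup.mk_one, map_one, one_mul]
    exact hh
  -- if an atom on (x,x) is inside the identity, then a coset identity holds
  have L1 : ∀ β : G x ⧸ H x x,
      Ratom G H φ x x β ⊆ {p : (Σ x, G x) × (Σ x, G x) | p.1 = p.2} →
      ∀ g : G x, (QuotientGroup.mk g : G x ⧸ H x x)
        = φ x x (QuotientGroup.mk g) * φ x x β := by
    intro β hβ g
    obtain ⟨h, hh⟩ := QuotientGroup.mk_surjective
      (φ x x (QuotientGroup.mk g : G x ⧸ H x x) * φ x x β)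
    have hmem : ((⟨x, g⟩ : Σ x, G x), (⟨x, h⟩ : Σ x, G x)) ∈ Ratom G H φ x x β :=
      ⟨g, h, rfl, rfl, hh⟩
    have heq : (⟨x, g⟩ : Σ x, G x) = ⟨x, h⟩ := hβ hmem
    have hg : g = h := by
      simpa using heq
    subst hg
    exact hh
  -- the key composition computation: θ {some p} ⊗ θ {some p} = θ {some p, none}
  have hcompP : ∀ p : ℓ, otimes (θ {some p}) (θ {some p}) = θ {some p, none} := by
    intro p
    rw [← hθcomp]
    congr 1
    simp [lynComp, lynAtom]
  -- if an atom of Gx×Gy is inside θ {some p}, then all the identity-coset atoms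
  -- R_{xx,g}, g ∈ H x y, are inside θ {some p, none}
  have hsub : ∀ (α : G x ⧸ H x y) (p : ℓ), Ratom G H φ x y α ⊆ θ {some p} →
      ∀ g ∈ (H x y : Set (G x)),
        Ratom G H φ x x (QuotientGroup.mk g) ⊆ θ {some p, none} := by
    intro α p hα g hg
    have h1 : Prod.swap ⁻¹' Ratom G H φ x y α ⊆ θ {some p} := by
      intro u hu
      rw [← hθconv]
      exact hα hu
    have h2 := hmono _ _ _ _ hα h1
    rw [hRconv, hcompP] at h2
    exact (Set.subset_biUnion_of_mem hg).trans h2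
  -- two atoms of Gx×Gy that land in θ of two points force the points to be equal
  have claimB : ∀ (α α' : G x ⧸ H x y) (p q : ℓ),
      Ratom G H φ x y α ⊆ θ {some p} → Ratom G H φ x y α' ⊆ θ {some q} → p = q := by
    intro α α' p q hα hα'
    by_contra hpq
    have hint : θ ({some p, none} : Set (Option ℓ)) ∩ θ {some q, none}
        = θ {none} := by
      rw [← hθinter]
      refine congrArg θ ?_
      ext a
      simp only [Set.mem_inter_iff, Set.mem_insert_iff, Set.mem_singleton_iff]
      constructor
      · rintro ⟨h1 | rfl, h2⟩
        · subst h1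
          rcases h2 with h2 | h2
          · exact absurd (Option.some_injective _ h2) hpq
          · exact absurd h2 (by simp)
        · rfl
      · rintro rfl
        exact ⟨Or.inr rfl, Or.inr rfl⟩
    have Id1 : Ratom G H φ x x (QuotientGroup.mk g₀) ⊆ θ {none} := by
      rw [← hint]
      exact Set.subset_inter (hsub α p hα g₀ hg₀mem) (hsub α' q hα' g₀ hg₀mem)
    have Id0 : Ratom G H φ x x (QuotientGroup.mk (1 : G x)) ⊆ θ {none} := by
      rw [← hint]
      exact Set.subset_inter (hsub α p hα 1 (one_mem _)) (hsub α' q hα' 1 (one_mem _))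
    rw [hθid] at Id1 Id0
    have E1 := L1 (QuotientGroup.mk g₀) Id1 1
    have E0 := L1 (QuotientGroup.mk (1 : G x)) Id0 1
    have hcancel : φ x x (QuotientGroup.mk g₀) = φ x x (QuotientGroup.mk (1 : G x)) :=
      mul_left_cancel (E1.symm.trans E0)
    have hq : (QuotientGroup.mk g₀ : G x ⧸ H x x) = QuotientGroup.mk (1 : G x) :=
      (φ x x).injective hcancel
    rw [QuotientGroup.mk_one] at hq
    have : g₀ ∈ H x x := (QuotientGroup.eq_one_iff g₀).mp hq
    rw [hHxx x] at this
    exact hg₀ne this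
  -- every atom of Gx×Gy lies inside θ {some p} for some point p
  have claimA : ∀ α : G x ⧸ H x y, ∃ p : ℓ, Ratom G H φ x y α ⊆ θ {some p} := by
    intro α
    obtain ⟨u, hu⟩ := hatomne x y α
    obtain ⟨a, ha⟩ := hcover u
    have hsuba : Ratom G H φ x y α ⊆ θ {a} := by
      rcases hatom x y α {a} with h | h
      · exact h
      · exact absurd (Set.mem_inter hu ha) (by rw [h]; exact id)
    cases a with
    | none =>
        exfalso
        rw [hθid] at hsuba
        obtain ⟨g, h, h1, h2, -⟩ := id hu
        have h3 : u.1 = u.2 := hsuba hu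
        rw [h1, h2] at h3
        exact hxney (congrArg Sigma.fst h3)
    | some p => exact ⟨p, hsuba⟩
  -- main subset property
  have main : ∀ p : ℓ, ((Gset G x ×ˢ Gset G y) ∩ θ {some p}).Nonempty →
      Gset G x ×ˢ Gset G y ⊆ θ {some p} := by
    rintro p ⟨u, hu1, hu2⟩
    have hu3 : u ∈ ⋃ α, Ratom G H φ x y α := by rw [hpart]; exact hu1
    obtain ⟨α, hα⟩ := Set.mem_iUnion.mp hu3
    have hsubp : Ratom G H φ x y α ⊆ θ {some p} := by
      rcases hatom x y α {some p} with h | h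
      · exact h
      · exact absurd (Set.mem_inter hα hu2) (by rw [h]; exact id)
    intro v hv
    have hv3 : v ∈ ⋃ α, Ratom G H φ x y α := by rw [hpart]; exact hv
    obtain ⟨α', hα'⟩ := Set.mem_iUnion.mp hv3
    obtain ⟨q, hq⟩ := claimA α'
    have hpq : p = q := claimB α α' p q hsubp hq
    rw [hpq]
    exact hq hα'
  -- a canonical element of Gx×Gy
  have hbase : ((⟨x, 1⟩ : Σ x, G x), (⟨y, 1⟩ : Σ x, G x)) ∈ Gset G x ×ˢ Gset G y :=
    ⟨rfl, rfl⟩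
  -- existence
  obtain ⟨p₀, hp₀⟩ := claimA 1
  have hp₀ne : ((Gset G x ×ˢ Gset G y) ∩ θ {some p₀}).Nonempty := by
    obtain ⟨u, hu⟩ := hatomne x y 1
    refine ⟨u, ?_, hp₀ hu⟩
    rw [← hpart]
    exact Set.mem_iUnion.mpr ⟨1, hu⟩
  constructor
  · refine ⟨p₀, hp₀ne, ?_⟩
    intro p hp
    by_contra hne
    have h1 := main p hp hbase
    have h2 := main p₀ hp₀ne hbase
    have h3 : ((⟨x, 1⟩ : Σ x, G x), (⟨y, 1⟩ : Σ x, G x)) ∈ θ ({some p} ∩ {some p₀}) := by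
      rw [hθinter]
      exact ⟨h1, h2⟩
    have h4 : ({some p} : Set (Option ℓ)) ∩ {some p₀} = ∅ := by
      ext a
      simp only [Set.mem_inter_iff, Set.mem_singleton_iff, Set.mem_empty_iff_false,
        iff_false, not_and]
      rintro rfl h
      exact hne (Option.some_injective _ h)
    rw [h4, hθempty] at h3
    exact h3
  · intro p hp
    have hA : Gset G x ×ˢ Gset G y ⊆ θ {some p} := main p hp
    have hB : Gset G y ×ˢ Gset G x ⊆ θ {some p} := by
      intro v hv
      have hswap : Prod.swap v ∈ Gset G x ×ˢ Gset G y := ⟨hv.2, hv.1⟩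
      have : v ∈ Prod.swap ⁻¹' θ {some p} := hA hswap
      rwa [hθconv] at this
    refine ⟨hA, hB, ?_⟩
    have hmonoP : θ ({some p} : Set (Option ℓ)) ⊆ θ {some p, none} :=
      hθmono _ _ (by intro a ha; exact Or.inl ha)
    have hXX : Gset G x ×ˢ Gset G x ⊆ θ {some p, none} := by
      have h := hmono _ _ _ _ hA hB
      rw [hrect x y x, hcompP p] at h
      exact h
    have hYY : Gset G y ×ˢ Gset G y ⊆ θ {some p, none} := by
      have h := hmono _ _ _ _ hB hA
      rw [hrect y x y, hcompP p] at h
      exact h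
    rintro ⟨u, v⟩ ⟨hu, hv⟩
    rcases hu with hu | hu <;> rcases hv with hv | hv
    · exact hXX ⟨hu, hv⟩
    · exact hmonoP (hA ⟨hu, hv⟩)
    · exact hmonoP (hB ⟨hu, hv⟩)
    · exact hYY ⟨hu, hv⟩
end

section
/- Under an embedding θ of the Lyndon algebra of a finite line (≥ 2 points) into a full coset relation algebra on a simple group triple, for each point p the relation ∼_p on indices defined by x ∼_p y iff G_x × G_y ⊆ θ({p,1'}) is symmetric, transitive, and reflexive on its domain (i.e., a partial equivalence relation). -/
open scoped Pointwise

/-- For a point `p` of the line, `x ∼_p y` iff `G_x × G_y ⊆ θ({p, 1'})`; this relation on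
the indices is symmetric, transitive, and reflexive on its domain (a partial
equivalence relation). -/
theorem simp_is_partial_equivalence
    {ℓ I : Type} [Fintype ℓ] [DecidableEq ℓ] (hl : 2 ≤ Fintype.card ℓ)
    (G : I → Type) [∀ x, Group (G x)]
    (H : ∀ x y, Subgroup (G x)) [∀ x y, (H x y).Normal]
    (φ : ∀ x y, (G x ⧸ H x y) ≃* (G y ⧸ H y x))
    (hφ : ∀ x y, φ y x = (φ x y).symm)
    (hHxx : ∀ x, H x x = ⊥)
    (otimes : Set ((Σ x, G x) × (Σ x, G x)) → Set ((Σ x, G x) × (Σ x, G x)) →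
      Set ((Σ x, G x) × (Σ x, G x)))
    (hmono : ∀ A B A' B', A ⊆ A' → B ⊆ B' → otimes A B ⊆ otimes A' B')
    (θ : Set (Option ℓ) → Set ((Σ x, G x) × (Σ x, G x)))
    (hθinj : Function.Injective θ)
    (hθun : ∀ A B, θ (A ∪ B) = θ A ∪ θ B)
    (hθc : ∀ A, θ Aᶜ = (θ A)ᶜ)
    (hθid : θ {none} = {p | p.1 = p.2})
    (hθconv : ∀ A, Prod.swap ⁻¹' θ A = θ A)
    (hθcomp : ∀ A B, θ (lynComp A B) = otimes (θ A) (θ B))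
    (hrect : ∀ x y z, otimes (Gset G x ×ˢ Gset G y) (Gset G y ×ˢ Gset G z) =
      Gset G x ×ˢ Gset G z)
    (p : ℓ) :
    (∀ x y : I, Gset G x ×ˢ Gset G y ⊆ θ {some p, none} →
      Gset G y ×ˢ Gset G x ⊆ θ {some p, none}) ∧
    (∀ x y z : I, Gset G x ×ˢ Gset G y ⊆ θ {some p, none} →
      Gset G y ×ˢ Gset G z ⊆ θ {some p, none} →
      Gset G x ×ˢ Gset G z ⊆ θ {some p, none}) ∧
    (∀ x y : I, Gset G x ×ˢ Gset G y ⊆ θ {some p, none} →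
      Gset G x ×ˢ Gset G x ⊆ θ {some p, none} ∧
      Gset G y ×ˢ Gset G y ⊆ θ {some p, none}) := by
  have hcompS : lynComp ({some p, none} : Set (Option ℓ)) {some p, none} = {some p, none} := by
    ext x
    simp only [lynComp, lynAtom, Set.mem_iUnion, Set.mem_insert_iff, Set.mem_singleton_iff]
    constructor
    · rintro ⟨a, (rfl | rfl), b, (rfl | rfl), hx⟩ <;> simp_all
    · rintro (rfl | rfl)
      · exact ⟨some p, Or.inl rfl, some p, Or.inl rfl, by simp⟩
      · exact ⟨none, Or.inr rfl, none, Or.inr rfl, rfl⟩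
  have hS : otimes (θ {some p, none}) (θ {some p, none}) = θ {some p, none} := by
    rw [← hθcomp, hcompS]
  have hsym : ∀ x y : I, Gset G x ×ˢ Gset G y ⊆ θ {some p, none} →
      Gset G y ×ˢ Gset G x ⊆ θ {some p, none} := by
    intro x y h q hq
    rw [← hθconv]
    exact h (by rcases hq with ⟨h1, h2⟩; exact ⟨h2, h1⟩)
  have htrans : ∀ x y z : I, Gset G x ×ˢ Gset G y ⊆ θ {some p, none} →
      Gset G y ×ˢ Gset G z ⊆ θ {some p, none} →
      Gset G x ×ˢ Gset G z ⊆ θ {some p, none} := by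
    intro x y z h1 h2
    rw [← hrect x y z, ← hS]
    exact hmono _ _ _ _ h1 h2
  exact ⟨hsym, htrans, fun x y h =>
    ⟨htrans x y x h (hsym x y h), htrans y x y (hsym x y h) h⟩⟩
end

section
/- If the Lyndon algebra of a finite line with at least two points is embeddable into a full coset relation algebra on a simple group triple, then all the normal subgroups H_{xy} are trivial: H_{xy} = {e_x} for all x, y ∈ I. -/
open scoped Pointwise

/-- Theorem fa7: if the Lyndon algebra of a finite line with at least two points embeds
into a full coset relation algebra on a simple group triple, then all the normal
subgroups `H_{xy}` are trivial. -/
theorem fa7_all_subgroups_trivial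
    {ℓ I : Type} [Fintype ℓ] [DecidableEq ℓ] (hl : 2 ≤ Fintype.card ℓ)
    (G : I → Type) [∀ x, Group (G x)]
    (H : ∀ x y, Subgroup (G x)) [∀ x y, (H x y).Normal]
    (φ : ∀ x y, (G x ⧸ H x y) ≃* (G y ⧸ H y x))
    (hφ : ∀ x y, φ y x = (φ x y).symm)
    (hHxx : ∀ x, H x x = ⊥)
    -- the Image Theorem: `φ_{xv}[H_{xv} ∘ H_{xy}] = K_{xv} ∘ H_{vy}` (with `K_{xv} = H_{vx}`)
    (himage : ∀ x v y : I,
      ⇑(φ x v) '' ((QuotientGroup.mk : G x → G x ⧸ H x v) '' ↑(H x v ⊔ H x y)) =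
        (QuotientGroup.mk : G v → G v ⧸ H v x) '' ↑(H v x ⊔ H v y))
    (otimes : Set ((Σ x, G x) × (Σ x, G x)) → Set ((Σ x, G x) × (Σ x, G x)) →
      Set ((Σ x, G x) × (Σ x, G x)))
    (hmono : ∀ A B A' B', A ⊆ A' → B ⊆ B' → otimes A B ⊆ otimes A' B')
    (θ : Set (Option ℓ) → Set ((Σ x, G x) × (Σ x, G x)))
    (hθinj : Function.Injective θ)
    (hθun : ∀ A B, θ (A ∪ B) = θ A ∪ θ B)
    (hθc : ∀ A, θ Aᶜ = (θ A)ᶜ)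
    (hθid : θ {none} = {p | p.1 = p.2})
    (hθconv : ∀ A, Prod.swap ⁻¹' θ A = θ A)
    (hθcomp : ∀ A B, θ (lynComp A B) = otimes (θ A) (θ B))
    (hrect : ∀ x y z, otimes (Gset G x ×ˢ Gset G y) (Gset G y ×ˢ Gset G z) =
      Gset G x ×ˢ Gset G z)
    -- Lemma fa2: a unique point above each pair with nontrivial subgroup
    (hfa2 : ∀ u v : I, H u v ≠ ⊥ →
      ∃! q : ℓ, (Gset G u ∪ Gset G v) ×ˢ (Gset G u ∪ Gset G v) ⊆ θ {some q, none})
    -- Lemma fa5: no `∼_p` class is all of `I`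
    (hfa5 : ∀ (p : ℓ) (x : I), ∃ v : I, ¬ Gset G x ×ˢ Gset G v ⊆ θ {some p, none})
    -- Lemma fa6: triviality of the `H`-subgroups toward non-equivalent indices
    (hfa6 : ∀ (p : ℓ) (x y : I), Gset G x ×ˢ Gset G y ⊆ θ {some p, none} →
      H x y ≠ ⊥ → ∀ v : I, ¬ Gset G x ×ˢ Gset G v ⊆ θ {some p, none} →
        H x v = ⊥ ∧ H y v = ⊥ ∧ H v x = ⊥ ∧ H v y = ⊥) :
    ∀ x y : I, H x y = ⊥ := by
  intro x y
  by_contra hne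
  obtain ⟨p, hp, -⟩ := hfa2 x y hne
  have hxy : Gset G x ×ˢ Gset G y ⊆ θ {some p, none} := fun q hq =>
    hp (Set.prod_mono Set.subset_union_left Set.subset_union_right hq)
  obtain ⟨v, hv⟩ := hfa5 p x
  obtain ⟨hxv, hyv, hvx, hvy⟩ := hfa6 p x y hxy hne v hv
  have him := himage x v y
  have e1 : H x v ⊔ H x y = H x y := by rw [hxv, bot_sup_eq]
  have e2 : H v x ⊔ H v y = ⊥ := by rw [hvx, hvy, bot_sup_eq]
  rw [e1, e2] at him
  apply hne
  rw [eq_bot_iff]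
  intro h hh
  have h1 : (φ x v) (QuotientGroup.mk h) ∈
      (QuotientGroup.mk : G v → G v ⧸ H v x) '' ↑(⊥ : Subgroup (G v)) := by
    rw [← him]; exact ⟨_, ⟨h, hh, rfl⟩, rfl⟩
  obtain ⟨g, hg, hgeq⟩ := h1
  have hg1 : g = 1 := by simpa using hg
  subst hg1
  have hφ1 : (φ x v) (QuotientGroup.mk h) = 1 := by
    rw [← hgeq, QuotientGroup.mk_one]
  have h2 : (QuotientGroup.mk h : G x ⧸ H x v) = 1 :=
    (φ x v).injective (by rw [hφ1, map_one])
  rw [QuotientGroup.eq_one_iff, hxv] at h2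
  exact h2
end

section
/- In a full coset relation algebra in which all subgroups H_{xy} are trivial ({e_x}), each atom R_{xy,α} is a functional relation: it is the graph of the bijection g ↦ ḡ · f̄ from G_x to G_y, where φ_{xy}({g}) = {ḡ} and α corresponds to the element f with φ-image f̄; in particular (u,v) ∈ R_{xy,α} and (u,w) ∈ R_{xy,α} imply v = w. -/
open scoped Pointwise

private lemma mk_bot_inj {G : Type*} [Group G] {a b : G}
    (h : (QuotientGroup.mk a : G ⧸ (⊥ : Subgroup G)) = QuotientGroup.mk b) : a = b := by
  have := (QuotientGroup.eq (s := (⊥ : Subgroup G))).mp h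
  have h1 : a⁻¹ * b = 1 := Subgroup.mem_bot.mp this
  exact (eq_of_inv_mul_eq_one h1)

private lemma mem_iff {Gx Gy : Type*} [Group Gx] [Group Gy]
    (φ : (Gx ⧸ (⊥ : Subgroup Gx)) ≃* (Gy ⧸ (⊥ : Subgroup Gy)))
    (α : Gx ⧸ (⊥ : Subgroup Gx)) (u : Gx) (v : Gy) :
    (u, v) ∈ cosetRel ⊥ ⊥ φ α ↔
      (QuotientGroup.mk v : Gy ⧸ (⊥ : Subgroup Gy)) = φ (QuotientGroup.mk u) * φ α := by
  constructor
  · rintro h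
    simp only [cosetRel, Set.mem_iUnion] at h
    obtain ⟨γ, hu, hv⟩ := h
    obtain ⟨a, ha, b, hb, rfl⟩ := hv
    have ha' : (QuotientGroup.mk a : Gy ⧸ (⊥ : Subgroup Gy)) = φ γ := ha
    have hb' : (QuotientGroup.mk b : Gy ⧸ (⊥ : Subgroup Gy)) = φ α := hb
    have hu' : (QuotientGroup.mk u : Gx ⧸ (⊥ : Subgroup Gx)) = γ := hu
    have : (QuotientGroup.mk (a * b) : Gy ⧸ (⊥ : Subgroup Gy)) =
        QuotientGroup.mk a * QuotientGroup.mk b := rfl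
    rw [this, ha', hb', hu']
  · intro h
    obtain ⟨a, ha⟩ := QuotientGroup.mk_surjective (φ (QuotientGroup.mk u))
    obtain ⟨b, hb⟩ := QuotientGroup.mk_surjective (φ α)
    have hv : v = a * b := by
      apply mk_bot_inj
      rw [h, ← ha, ← hb]; rfl
    simp only [cosetRel, Set.mem_iUnion]
    exact ⟨QuotientGroup.mk u, rfl, a, ha, b, hb, hv.symm⟩

/-- In a full coset relation algebra in which the subgroups `H_{xy}` are trivial, every
atom `R_{xy,α}` is a functional relation: it is the graph of the bijection
`g ↦ ḡ·f̄` (where `φ` sends the singleton coset of `g` to that of `ḡ`, and `α` is the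
singleton coset of `f`); in particular `(u,v) ∈ R_{xy,α}` and `(u,w) ∈ R_{xy,α}` imply
`v = w`. -/
theorem atom_functional_of_trivial_subgroups
    {Gx Gy : Type*} [Group Gx] [Group Gy]
    (φ : (Gx ⧸ (⊥ : Subgroup Gx)) ≃* (Gy ⧸ (⊥ : Subgroup Gy)))
    (α : Gx ⧸ (⊥ : Subgroup Gx)) :
    (∀ u v w, (u, v) ∈ cosetRel ⊥ ⊥ φ α → (u, w) ∈ cosetRel ⊥ ⊥ φ α → v = w) ∧
    (∀ u v, (u, v) ∈ cosetRel ⊥ ⊥ φ α ↔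
      (QuotientGroup.mk v : Gy ⧸ (⊥ : Subgroup Gy)) =
        φ (QuotientGroup.mk u) * φ α) := by
  refine ⟨fun u v w hv hw => ?_, fun u v => mem_iff φ α u v⟩
  exact mk_bot_inj (((mem_iff φ α u v).mp hv).trans ((mem_iff φ α u w).mp hw).symm)
end
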